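/- Let β > 0, let S be a finite nonempty set of scales, and for each s ∈ S and each pair (λ, ω) ∈ ℝ² let θ_{s,λ} ∈ ℝ be arbitrary (e.g. θ_{s,λ} = arccos(1 − sλ/2)) and define Ŵ_s(λ, ω) = Σ_{t=0}^∞ e^{-βt} cos(t θ_{s,λ}) e^{-iωt}. Then for every (λ, ω), |S| · ((1 − e^{-β})/4)² ≤ Σ_{s∈S} |Ŵ_s(λ, ω)|² ≤ |S| · (1/(1 − e^{-β}))². In particular the frame bounds A = min Σ_s |Ŵ_s|² and B = max Σ_s |Ŵ_s|² over any finite set of pairs (λ, ω) satisfy 0 < A ≤ B < ∞, so the causal damped wave Dynamic Graph Wavelets form a frame for every β > 0. -/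

import Mathlib

open Complex

private lemma dgw_norm_exp (w : ℂ) : ‖Complex.exp w‖ = Real.exp w.re := by
  rw [Complex.norm_exp]

/-- Real part lower bound for `(1 - z)⁻¹` when `‖z‖ ≤ r < 1`. -/
private lemma dgw_inv_re_lower {r : ℝ} (hr0 : 0 ≤ r) (hr1 : r < 1) {z : ℂ} (hz : ‖z‖ ≤ r) :
    (1 - r) / 4 ≤ ((1 - z)⁻¹).re := by
  have hzre : z.re ≤ r := le_trans (le_trans (Complex.re_le_norm z) (le_of_eq rfl))
    hz
  have hlb : 1 - r ≤ ‖(1 : ℂ) - z‖ := by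
    have := norm_sub_norm_le (1 : ℂ) z
    simp only [norm_one] at this
    linarith
  have hne : (1 : ℂ) - z ≠ 0 := by
    intro h
    rw [h, norm_zero] at hlb
    linarith
  have hpos : 0 < Complex.normSq (1 - z) := Complex.normSq_pos.mpr hne
  have hnorm : ‖(1 : ℂ) - z‖ ≤ 2 := by
    calc ‖(1 : ℂ) - z‖ ≤ ‖(1 : ℂ)‖ + ‖z‖ := norm_sub_le _ _
    _ ≤ 1 + r := by simp only [norm_one]; linarith
    _ ≤ 2 := by linarith
  have hsq : Complex.normSq (1 - z) ≤ 4 := by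
    have := Complex.sq_norm (1 - z)
    nlinarith [norm_nonneg ((1 : ℂ) - z)]
  rw [Complex.inv_re]
  have hre : ((1 : ℂ) - z).re = 1 - z.re := by simp
  rw [hre]
  exact div_le_div₀ (by linarith) (by linarith) hpos hsq

/-- Norm upper bound for `(1 - z)⁻¹` when `‖z‖ ≤ r < 1`. -/
private lemma dgw_inv_norm_upper {r : ℝ} (hr1 : r < 1) {z : ℂ} (hz : ‖z‖ ≤ r) :
    ‖(1 - z)⁻¹‖ ≤ 1 / (1 - r) := by
  have h1 : 1 - r ≤ ‖(1 : ℂ) - z‖ := by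
    have := norm_sub_norm_le (1 : ℂ) z
    simp only [norm_one] at this
    linarith
  rw [norm_inv, one_div]
  exact inv_anti₀ (by linarith) h1

/-- Closed form of the causal damped wave series. -/
private lemma dgw_tsum_eq (β θ ω : ℝ) (hβ : 0 < β) :
    (∑' t : ℕ, (Real.exp (-β * t) * Real.cos (t * θ) : ℂ) * Complex.exp (-(Complex.I * ω * t)))
    = ((1 - Complex.exp (-(β : ℂ) + Complex.I * ((θ : ℂ) - ω)))⁻¹
      + (1 - Complex.exp (-(β : ℂ) - Complex.I * ((θ : ℂ) + ω)))⁻¹) / 2 := by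
  set z₁ : ℂ := Complex.exp (-(β : ℂ) + Complex.I * ((θ : ℂ) - ω)) with hz₁
  set z₂ : ℂ := Complex.exp (-(β : ℂ) - Complex.I * ((θ : ℂ) + ω)) with hz₂
  have hn1 : ‖z₁‖ < 1 := by
    rw [hz₁, dgw_norm_exp]
    simp only [Complex.add_re, Complex.neg_re, Complex.ofReal_re]
    rw [show (Complex.I * ((θ : ℂ) - ω)).re = 0 by simp]
    rw [add_zero]
    exact Real.exp_lt_one_iff.mpr (by linarith)
  have hn2 : ‖z₂‖ < 1 := by
    rw [hz₂, dgw_norm_exp]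
    simp only [Complex.sub_re, Complex.neg_re, Complex.ofReal_re]
    rw [show (Complex.I * ((θ : ℂ) + ω)).re = 0 by simp]
    rw [sub_zero]
    exact Real.exp_lt_one_iff.mpr (by linarith)
  have hterm : ∀ t : ℕ,
      (Real.exp (-β * t) * Real.cos (t * θ) : ℂ) * Complex.exp (-(Complex.I * ω * t))
      = (z₁ ^ t + z₂ ^ t) / 2 := by
    intro t
    have h1 : z₁ ^ t = Complex.exp ((t : ℂ) * (-(β : ℂ) + Complex.I * ((θ : ℂ) - ω))) :=
      (Complex.exp_nat_mul _ t).symm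
    have h2 : z₂ ^ t = Complex.exp ((t : ℂ) * (-(β : ℂ) - Complex.I * ((θ : ℂ) + ω))) :=
      (Complex.exp_nat_mul _ t).symm
    have hc : ((Real.cos (t * θ) : ℝ) : ℂ)
        = (Complex.exp (((t : ℂ) * θ) * Complex.I) + Complex.exp (-((t : ℂ) * θ) * Complex.I)) / 2 := by
      rw [Complex.ofReal_cos]
      push_cast
      rw [eq_div_iff (two_ne_zero), mul_comm, Complex.two_cos]
    have he : ((Real.exp (-β * t) : ℝ) : ℂ) = Complex.exp (((-β * t : ℝ) : ℂ)) :=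
      Complex.ofReal_exp _
    have e1 : Complex.exp (((-β * t : ℝ) : ℂ)) * Complex.exp (((t : ℂ) * θ) * Complex.I)
        * Complex.exp (-(Complex.I * ω * t))
        = Complex.exp ((t : ℂ) * (-(β : ℂ) + Complex.I * ((θ : ℂ) - ω))) := by
      rw [← Complex.exp_add, ← Complex.exp_add]
      congr 1
      push_cast
      ring
    have e2 : Complex.exp (((-β * t : ℝ) : ℂ)) * Complex.exp (-((t : ℂ) * θ) * Complex.I)
        * Complex.exp (-(Complex.I * ω * t))
        = Complex.exp ((t : ℂ) * (-(β : ℂ) - Complex.I * ((θ : ℂ) + ω))) := by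
      rw [← Complex.exp_add, ← Complex.exp_add]
      congr 1
      push_cast
      ring
    rw [he, hc, h1, h2]
    linear_combination (e1 + e2) / 2
  rw [tsum_congr hterm]
  have s1 : Summable (fun t : ℕ => z₁ ^ t) := summable_geometric_of_norm_lt_one hn1
  have s2 : Summable (fun t : ℕ => z₂ ^ t) := summable_geometric_of_norm_lt_one hn2
  rw [tsum_div_const, Summable.tsum_add s1 s2,
    tsum_geometric_of_norm_lt_one hn1, tsum_geometric_of_norm_lt_one hn2]

/-- Pointwise norm bounds for the causal damped wave transfer function. -/
private lemma dgw_W_bounds (β θ ω : ℝ) (hβ : 0 < β) :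
    (1 - Real.exp (-β)) / 4
      ≤ ‖∑' t : ℕ, (Real.exp (-β * t) * Real.cos (t * θ) : ℂ)
          * Complex.exp (-(Complex.I * ω * t))‖ ∧
    ‖∑' t : ℕ, (Real.exp (-β * t) * Real.cos (t * θ) : ℂ)
          * Complex.exp (-(Complex.I * ω * t))‖ ≤ 1 / (1 - Real.exp (-β)) := by
  set r : ℝ := Real.exp (-β) with hr
  have hr0 : 0 < r := Real.exp_pos _
  have hr1 : r < 1 := Real.exp_lt_one_iff.mpr (by linarith)
  set z₁ : ℂ := Complex.exp (-(β : ℂ) + Complex.I * ((θ : ℂ) - ω)) with hz₁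
  set z₂ : ℂ := Complex.exp (-(β : ℂ) - Complex.I * ((θ : ℂ) + ω)) with hz₂
  have hn1 : ‖z₁‖ = r := by
    rw [hz₁, dgw_norm_exp]
    congr 1
    simp
  have hn2 : ‖z₂‖ = r := by
    rw [hz₂, dgw_norm_exp]
    congr 1
    simp
  have heq := dgw_tsum_eq β θ ω hβ
  rw [heq]
  constructor
  · -- lower bound via real part
    have hre1 : (1 - r) / 4 ≤ ((1 - z₁)⁻¹).re :=
      dgw_inv_re_lower hr0.le hr1 hn1.le
    have hre2 : (1 - r) / 4 ≤ ((1 - z₂)⁻¹).re :=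
      dgw_inv_re_lower hr0.le hr1 hn2.le
    have hre : (1 - r) / 4 ≤ ((((1 - z₁)⁻¹ + (1 - z₂)⁻¹)) / 2).re := by
      have : ((((1 - z₁)⁻¹ + (1 - z₂)⁻¹)) / 2).re
          = (((1 - z₁)⁻¹).re + ((1 - z₂)⁻¹).re) / 2 := by
        rw [show ((1 - z₁)⁻¹ + (1 - z₂)⁻¹) / 2
            = ((1 - z₁)⁻¹ + (1 - z₂)⁻¹) * ((1 / 2 : ℝ) : ℂ) by push_cast; ring]
        rw [Complex.mul_re]
        simp [Complex.add_re]
        ring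
      rw [this]
      linarith
    calc (1 - r) / 4 ≤ ((((1 - z₁)⁻¹ + (1 - z₂)⁻¹)) / 2).re := hre
    _ ≤ ‖(((1 - z₁)⁻¹ + (1 - z₂)⁻¹)) / 2‖ := Complex.re_le_norm _
  · -- upper bound
    have h1 : ‖(1 - z₁)⁻¹‖ ≤ 1 / (1 - r) := dgw_inv_norm_upper hr1 hn1.le
    have h2 : ‖(1 - z₂)⁻¹‖ ≤ 1 / (1 - r) := dgw_inv_norm_upper hr1 hn2.le
    calc ‖(((1 - z₁)⁻¹ + (1 - z₂)⁻¹)) / 2‖ = ‖(1 - z₁)⁻¹ + (1 - z₂)⁻¹‖ / 2 := by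
          rw [norm_div]; norm_num
    _ ≤ (‖(1 - z₁)⁻¹‖ + ‖(1 - z₂)⁻¹‖) / 2 := by
          have := norm_add_le ((1 - z₁)⁻¹) ((1 - z₂)⁻¹)
          linarith
    _ ≤ 1 / (1 - r) := by linarith

/-- **The causal damped wave Dynamic Graph Wavelets form a frame for every damping
`β > 0`.** With `Ŵ_s(λ, ω) = ∑_{t=0}^∞ e^{-βt} cos(t θ_{s,λ}) e^{-iωt}` for arbitrary
phases `θ_{s,λ}` and a finite nonempty scale set `S`,
`|S|((1 − e^{-β})/4)² ≤ ∑_{s∈S} |Ŵ_s(λ,ω)|² ≤ |S|(1/(1 − e^{-β}))²` for all `(λ, ω)`;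
in particular the frame bounds `A = min ∑_s |Ŵ_s|²` and `B = max ∑_s |Ŵ_s|²` over any
finite nonempty set of pairs `(λ, ω)` satisfy `0 < A ≤ B < ∞`. -/
theorem damped_wave_dgw_frame {ι : Type*} (β : ℝ) (hβ : 0 < β)
    (S : Finset ι) (hS : S.Nonempty)
    (θ : ι → ℝ → ℝ)
    (W : ι → ℝ → ℝ → ℂ)
    (hW : ∀ s lam ω, W s lam ω = ∑' t : ℕ,
      (Real.exp (-β * t) * Real.cos (t * θ s lam) : ℂ) * Complex.exp (-(Complex.I * ω * t))) :
    (∀ lam ω : ℝ,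
      (S.card : ℝ) * ((1 - Real.exp (-β)) / 4) ^ 2 ≤ ∑ s ∈ S, ‖W s lam ω‖ ^ 2 ∧
      ∑ s ∈ S, ‖W s lam ω‖ ^ 2 ≤ (S.card : ℝ) * (1 / (1 - Real.exp (-β))) ^ 2) ∧
    (∀ (P : Finset (ℝ × ℝ)) (hP : P.Nonempty),
      0 < P.inf' hP (fun p => ∑ s ∈ S, ‖W s p.1 p.2‖ ^ 2) ∧
      P.inf' hP (fun p => ∑ s ∈ S, ‖W s p.1 p.2‖ ^ 2) ≤
        P.sup' hP (fun p => ∑ s ∈ S, ‖W s p.1 p.2‖ ^ 2)) := by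
  have hr1 : Real.exp (-β) < 1 := Real.exp_lt_one_iff.mpr (by linarith)
  have hlow : 0 < (1 - Real.exp (-β)) / 4 := by linarith
  have key : ∀ lam ω : ℝ, ∀ s,
      ((1 - Real.exp (-β)) / 4) ^ 2 ≤ ‖W s lam ω‖ ^ 2 ∧
      ‖W s lam ω‖ ^ 2 ≤ (1 / (1 - Real.exp (-β))) ^ 2 := by
    intro lam ω s
    rw [hW s lam ω]
    obtain ⟨h1, h2⟩ := dgw_W_bounds β (θ s lam) ω hβ
    constructor
    · exact pow_le_pow_left₀ hlow.le h1 2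
    · exact pow_le_pow_left₀ (norm_nonneg _) h2 2
  have main : ∀ lam ω : ℝ,
      (S.card : ℝ) * ((1 - Real.exp (-β)) / 4) ^ 2 ≤ ∑ s ∈ S, ‖W s lam ω‖ ^ 2 ∧
      ∑ s ∈ S, ‖W s lam ω‖ ^ 2 ≤ (S.card : ℝ) * (1 / (1 - Real.exp (-β))) ^ 2 := by
    intro lam ω
    constructor
    · have := Finset.card_nsmul_le_sum S (fun s => ‖W s lam ω‖ ^ 2)
        (((1 - Real.exp (-β)) / 4) ^ 2) (fun s _ => (key lam ω s).1)
      simpa [nsmul_eq_mul] using this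
    · have := Finset.sum_le_card_nsmul S (fun s => ‖W s lam ω‖ ^ 2)
        ((1 / (1 - Real.exp (-β))) ^ 2) (fun s _ => (key lam ω s).2)
      simpa [nsmul_eq_mul] using this
  refine ⟨main, fun P hP => ⟨?_, ?_⟩⟩
  · rw [Finset.lt_inf'_iff]
    intro p _
    have hcard : (0 : ℝ) < S.card := by
      exact_mod_cast Finset.card_pos.mpr hS
    have := (main p.1 p.2).1
    have hpos : 0 < (S.card : ℝ) * ((1 - Real.exp (-β)) / 4) ^ 2 :=
      mul_pos hcard (pow_pos hlow 2)
    linarith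
  · obtain ⟨p, hp⟩ := id hP
    have h1 : P.inf' hP (fun p => ∑ s ∈ S, ‖W s p.1 p.2‖ ^ 2) ≤ ∑ s ∈ S, ‖W s p.1 p.2‖ ^ 2 :=
      Finset.inf'_le _ hp
    have h2 := Finset.le_sup' (fun p : ℝ × ℝ => ∑ s ∈ S, ‖W s p.1 p.2‖ ^ 2) hp
    exact h1.trans h2
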